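/- Let λ > 0 and let μ be a compactly supported probability measure on SL(2,ℝ) such that for μ^ℕ-almost every sequence ḡ = (g₁,g₂,...) there exists θ̄(ḡ) ∈ ℝ with lim_{n→∞} (1/n) log ‖(g_{λn} r_{θ̄})(g_n⋯g₁)^{-1}‖ = 0, where the distribution of θ̄ is uniform on the circle. Then, using the decomposition r_θ = ĥ_{tanθ} g_{log cosθ} h_{-tanθ} valid for θ ∉ {±π/2}, for μ^ℕ-a.e. ḡ there exists s̄(ḡ) ∈ ℝ with lim_{n→∞} (1/n) log ‖(g_{λn} h_{s̄})(g_n⋯g₁)^{-1}‖ = 0, and the distribution of s̄ is in the measure class of Lebesgue measure on ℝ. -/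

import Mathlib

open MeasureTheory ProbabilityTheory

/-- Matrices over ℝ carry the Borel (product) measurable structure. -/
instance matrixMeasurableSpace : MeasurableSpace (Matrix (Fin 2) (Fin 2) ℝ) :=
  MeasurableSpace.pi (m := fun _ : Fin 2 => MeasurableSpace.pi)

/-- An auxiliary matrix norm on 2×2 real matrices (the statement holds for any matrix norm). -/
noncomputable def mnorm (A : Matrix (Fin 2) (Fin 2) ℝ) : ℝ := ∑ i, ∑ j, |A i j|

/-- Teichmüller geodesic flow matrix g_t = diag(e^t, e^{-t}). -/
noncomputable def gmat (t : ℝ) : Matrix (Fin 2) (Fin 2) ℝ := !![Real.exp t, 0; 0, Real.exp (-t)]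

/-- Horocycle matrix h_s = [[1,s],[0,1]]. -/
def hmat (s : ℝ) : Matrix (Fin 2) (Fin 2) ℝ := !![1, s; 0, 1]

/-- Rotation matrix r_θ. -/
noncomputable def rotmat (θ : ℝ) : Matrix (Fin 2) (Fin 2) ℝ :=
  !![Real.cos θ, -Real.sin θ; Real.sin θ, Real.cos θ]

/-- The reversed product g_n ⋯ g_1 (here indexed from 0: G_{n-1} ⋯ G_0). -/
def revProd {Ω M : Type*} [Monoid M] (G : ℕ → Ω → M) (n : ℕ) (ω : Ω) : M :=
  (((List.range n).reverse).map fun i => G i ω).prod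


lemma mnorm_nonneg (A : Matrix (Fin 2) (Fin 2) ℝ) : 0 ≤ mnorm A := by
  unfold mnorm; positivity

lemma mnorm_mul_le (A B : Matrix (Fin 2) (Fin 2) ℝ) : mnorm (A * B) ≤ mnorm A * mnorm B := by
  simp only [mnorm, Fin.sum_univ_two, Matrix.mul_apply]
  have h : ∀ i j : Fin 2, |A i 0 * B 0 j + A i 1 * B 1 j| ≤ |A i 0| * |B 0 j| + |A i 1| * |B 1 j| := by
    intro i j
    calc |A i 0 * B 0 j + A i 1 * B 1 j| ≤ |A i 0 * B 0 j| + |A i 1 * B 1 j| := abs_add_le _ _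
    _ = |A i 0| * |B 0 j| + |A i 1| * |B 1 j| := by rw [abs_mul, abs_mul]
  have h00 := h 0 0; have h01 := h 0 1; have h10 := h 1 0; have h11 := h 1 1
  have n1 := abs_nonneg (A 0 0); have n2 := abs_nonneg (A 0 1)
  have n3 := abs_nonneg (A 1 0); have n4 := abs_nonneg (A 1 1)
  have m1 := abs_nonneg (B 0 0); have m2 := abs_nonneg (B 0 1)
  have m3 := abs_nonneg (B 1 0); have m4 := abs_nonneg (B 1 1)
  nlinarith [h00, h01, h10, h11, mul_nonneg n1 m3, mul_nonneg n1 m4, mul_nonneg n2 m1, mul_nonneg n2 m2,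
    mul_nonneg n3 m3, mul_nonneg n3 m4, mul_nonneg n4 m1, mul_nonneg n4 m2]

lemma one_le_mnorm {M : Matrix (Fin 2) (Fin 2) ℝ} (h : M.det = 1) : 1 ≤ mnorm M := by
  rw [Matrix.det_fin_two] at h
  simp only [mnorm, Fin.sum_univ_two]
  have h1 : M 0 0 * M 1 1 ≤ |M 0 0| * |M 1 1| := by rw [← abs_mul]; exact le_abs_self _
  have h2 : -(M 0 1 * M 1 0) ≤ |M 0 1| * |M 1 0| := by rw [← abs_mul]; exact neg_le_abs _
  have n1 := abs_nonneg (M 0 0); have n2 := abs_nonneg (M 0 1)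
  have n3 := abs_nonneg (M 1 0); have n4 := abs_nonneg (M 1 1)
  nlinarith [mul_nonneg n1 n2, mul_nonneg n3 n4, mul_nonneg n1 n3, mul_nonneg n2 n4,
    sq_nonneg (|M 0 0| + |M 0 1| + |M 1 0| + |M 1 1|)]


lemma det_gmat (t : ℝ) : (gmat t).det = 1 := by
  simp [gmat, Matrix.det_fin_two_of, ← Real.exp_add]

lemma det_hmat (s : ℝ) : (hmat s).det = 1 := by simp [hmat, Matrix.det_fin_two_of]

lemma det_rotmat (θ : ℝ) : (rotmat θ).det = 1 := by
  simp [rotmat, Matrix.det_fin_two_of]; nlinarith [Real.sin_sq_add_cos_sq θ]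

lemma det_revProd {Ω : Type*} (G : ℕ → Ω → Matrix (Fin 2) (Fin 2) ℝ)
    (hGdet : ∀ n ω, (G n ω).det = 1) (n : ℕ) (ω : Ω) : (revProd G n ω).det = 1 := by
  induction n with
  | zero => simp [revProd]
  | succ m ih =>
    have : revProd G (m+1) ω = G m ω * revProd G m ω := by
      simp [revProd, List.range_succ]
    rw [this, Matrix.det_mul, hGdet, ih, one_mul]

lemma key_identity (θ T : ℝ) (hc : Real.cos θ ≠ 0) :
    gmat T * hmat (-Real.tan θ)
      = !![(Real.cos θ)⁻¹, 0; -Real.sin θ * Real.exp (-(2*T)), Real.cos θ]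
        * (gmat T * rotmat θ) := by
  have hs := Real.sin_sq_add_cos_sq θ
  have he : Real.exp (-(2*T)) * Real.exp T = Real.exp (-T) := by
    rw [← Real.exp_add]; ring_nf
  ext i j
  fin_cases i <;> fin_cases j <;>
    simp [gmat, hmat, rotmat, Matrix.mul_apply, Fin.sum_univ_two, Real.tan_eq_sin_div_cos]
  · field_simp
  · field_simp
  · linear_combination (Real.sin θ * Real.cos θ) * he
  · linear_combination (-Real.sin θ^2) * he + (-Real.exp (-T)) * hs

lemma key_ineq (θ T : ℝ) (hc : Real.cos θ ≠ 0) (hT : 0 ≤ T) (A : Matrix (Fin 2) (Fin 2) ℝ) :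
    mnorm (gmat T * hmat (-Real.tan θ) * A)
      ≤ (|Real.cos θ|⁻¹ + |Real.cos θ| + |Real.sin θ|) * mnorm (gmat T * rotmat θ * A) := by
  have h1 : gmat T * hmat (-Real.tan θ) * A
      = !![(Real.cos θ)⁻¹, 0; -Real.sin θ * Real.exp (-(2*T)), Real.cos θ]
        * (gmat T * rotmat θ * A) := by
    rw [key_identity θ T hc, mul_assoc]
  rw [h1]
  refine le_trans (mnorm_mul_le _ _) (mul_le_mul_of_nonneg_right ?_ (mnorm_nonneg _))
  have hE : Real.exp (-(2*T)) ≤ 1 := Real.exp_le_one_iff.mpr (by linarith)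
  have hE0 : 0 < Real.exp (-(2*T)) := Real.exp_pos _
  have : mnorm !![(Real.cos θ)⁻¹, 0; -Real.sin θ * Real.exp (-(2*T)), Real.cos θ]
      = |(Real.cos θ)|⁻¹ + |Real.sin θ| * Real.exp (-(2*T)) + |Real.cos θ| := by
    simp [mnorm, Fin.sum_univ_two, abs_mul, abs_inv, abs_of_pos hE0]
    ring
  rw [this]
  nlinarith [abs_nonneg (Real.sin θ)]

lemma tracking_pointwise {lam : ℝ} (hlam : 0 < lam) (θ : ℝ) (hc : Real.cos θ ≠ 0)
    (A : ℕ → Matrix (Fin 2) (Fin 2) ℝ) (hdet : ∀ n, (A n).det = 1)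
    (h : Filter.Tendsto (fun n : ℕ => (n : ℝ)⁻¹ * Real.log (mnorm (gmat (lam * n) * rotmat θ * A n)))
      Filter.atTop (nhds 0)) :
    Filter.Tendsto (fun n : ℕ => (n : ℝ)⁻¹ * Real.log (mnorm (gmat (lam * n) * hmat (-Real.tan θ) * A n)))
      Filter.atTop (nhds 0) := by
  set C : ℝ := |Real.cos θ|⁻¹ + |Real.cos θ| + |Real.sin θ| with hCdef
  have hcabs : 0 < |Real.cos θ| := abs_pos.mpr hc
  have hC1 : 1 ≤ C := by
    have h1 : |Real.cos θ| ≤ 1 := Real.abs_cos_le_one θ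
    have : 1 ≤ |Real.cos θ|⁻¹ := one_le_inv_iff₀.mpr ⟨hcabs, h1⟩
    have := abs_nonneg (Real.sin θ)
    simp only [hCdef]; linarith
  have m1 : ∀ n : ℕ, 1 ≤ mnorm (gmat (lam * n) * hmat (-Real.tan θ) * A n) := fun n =>
    one_le_mnorm (by rw [Matrix.det_mul, Matrix.det_mul, det_gmat, det_hmat, hdet, one_mul, one_mul])
  have m2 : ∀ n : ℕ, 1 ≤ mnorm (gmat (lam * n) * rotmat θ * A n) := fun n =>
    one_le_mnorm (by rw [Matrix.det_mul, Matrix.det_mul, det_gmat, det_rotmat, hdet, one_mul, one_mul])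
  have lower : ∀ n : ℕ, (0:ℝ) ≤ (n : ℝ)⁻¹ * Real.log (mnorm (gmat (lam * n) * hmat (-Real.tan θ) * A n)) :=
    fun n => mul_nonneg (by positivity) (Real.log_nonneg (m1 n))
  have upper : ∀ n : ℕ,
      (n : ℝ)⁻¹ * Real.log (mnorm (gmat (lam * n) * hmat (-Real.tan θ) * A n))
        ≤ (n : ℝ)⁻¹ * Real.log C + (n : ℝ)⁻¹ * Real.log (mnorm (gmat (lam * n) * rotmat θ * A n)) := by
    intro n
    rw [← mul_add]
    refine mul_le_mul_of_nonneg_left ?_ (by positivity)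
    have hk := key_ineq θ (lam * n) hc (by positivity) (A n)
    calc Real.log (mnorm (gmat (lam * n) * hmat (-Real.tan θ) * A n))
        ≤ Real.log (C * mnorm (gmat (lam * n) * rotmat θ * A n)) :=
          Real.log_le_log (by linarith [m1 n]) hk
      _ = Real.log C + Real.log (mnorm (gmat (lam * n) * rotmat θ * A n)) :=
          Real.log_mul (by linarith) (by linarith [m2 n])
  have hupper : Filter.Tendsto (fun n : ℕ =>
      (n : ℝ)⁻¹ * Real.log C + (n : ℝ)⁻¹ * Real.log (mnorm (gmat (lam * n) * rotmat θ * A n)))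
      Filter.atTop (nhds 0) := by
    have h0 : Filter.Tendsto (fun n : ℕ => (n : ℝ)⁻¹ * Real.log C) Filter.atTop (nhds 0) := by
      simpa using (tendsto_inv_atTop_nhds_zero_nat (𝕜 := ℝ)).mul_const (Real.log C)
    simpa using h0.add h
  exact tendsto_of_tendsto_of_tendsto_of_le_of_le tendsto_const_nhds hupper lower upper


lemma null_image_diff {f : ℝ → ℝ} {N : Set ℝ} (hf : DifferentiableOn ℝ f N)
    (hN : volume N = 0) : volume (f '' N) = 0 :=
  MeasureTheory.addHaar_image_eq_zero_of_differentiableOn_of_addHaar_eq_zero volume hf hN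

lemma cos_ne_zero_Ioo {θ : ℝ} (h1 : Real.pi/2 < θ) (h2 : θ < 3*Real.pi/2) : Real.cos θ ≠ 0 := by
  intro h
  rcases Real.cos_eq_zero_iff.mp h with ⟨k, hk⟩
  have hReal.pi : 0 < Real.pi := Real.pi_pos
  rw [hk] at h1 h2
  have l1 : (1:ℝ) < 2*(k:ℝ)+1 := by nlinarith
  have l2 : 2*(k:ℝ)+1 < 3 := by nlinarith
  have i1 : (1:ℤ) < 2*k+1 := by exact_mod_cast l1
  have i2 : (2*k+1 : ℤ) < 3 := by exact_mod_cast l2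
  omega

lemma volume_cos_zero : volume {x : ℝ | Real.cos x = 0} = 0 := by
  have hsub : {x : ℝ | Real.cos x = 0} ⊆ Set.range (fun k : ℤ => (2*(k:ℝ)+1)*Real.pi/2) := by
    intro x hx
    rcases Real.cos_eq_zero_iff.mp hx with ⟨k, hk⟩
    exact ⟨k, hk.symm⟩
  exact measure_mono_null hsub ((Set.countable_range _).measure_zero _)

lemma preimage_neg_tan_null {E : Set ℝ} (hE : volume E = 0) :
    volume ((fun θ : ℝ => -Real.tan θ) ⁻¹' E ∩ Set.Ico 0 (2*Real.pi)) = 0 := by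
  have hReal.pi : 0 < Real.pi := Real.pi_pos
  set N : Set ℝ := (fun x : ℝ => -x) '' E with hNdef
  have hN : volume N = 0 :=
    null_image_diff (differentiable_neg.differentiableOn) hE
  have hsub : (fun θ : ℝ => -Real.tan θ) ⁻¹' E ∩ Set.Ico 0 (2*Real.pi)
      ⊆ ({Real.pi/2} : Set ℝ) ∪ {3*Real.pi/2} ∪ (Real.arctan '' N)
        ∪ ((fun x => Real.pi + Real.arctan x) '' N) ∪ ((fun x => 2*Real.pi + Real.arctan x) '' N) := by
    rintro θ ⟨hθE, h0, h2Real.pi⟩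
    have htN : Real.tan θ ∈ N := ⟨-Real.tan θ, hθE, by ring⟩
    rcases lt_trichotomy θ (Real.pi/2) with hlt | heq | hgt
    · refine Or.inl (Or.inl (Or.inr ?_))
      exact ⟨Real.tan θ, htN, Real.arctan_tan (by linarith) hlt⟩
    · exact Or.inl (Or.inl (Or.inl (Or.inl heq)))
    · rcases lt_trichotomy θ (3*Real.pi/2) with hlt2 | heq2 | hgt2
      · refine Or.inl (Or.inr ?_)
        refine ⟨Real.tan θ, htN, ?_⟩
        have harc : Real.arctan (Real.tan θ) = θ - Real.pi := by
          rw [← Real.tan_sub_pi, Real.arctan_tan (by linarith) (by linarith)]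
        show _ + Real.arctan (Real.tan θ) = θ; rw [harc]; ring
      · exact Or.inl (Or.inl (Or.inl (Or.inr heq2)))
      · refine Or.inr ?_
        refine ⟨Real.tan θ, htN, ?_⟩
        have ht2 : Real.tan (θ - 2*Real.pi) = Real.tan θ := by
          rw [show θ - 2*Real.pi = θ - Real.pi - Real.pi by ring, Real.tan_sub_pi, Real.tan_sub_pi]
        have harc : Real.arctan (Real.tan θ) = θ - 2*Real.pi := by
          rw [← ht2, Real.arctan_tan (by linarith) (by linarith)]
        show _ + Real.arctan (Real.tan θ) = θ; rw [harc]; ring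
  refine measure_mono_null hsub ?_
  have i1 : volume (Real.arctan '' N) = 0 :=
    null_image_diff (Real.differentiable_arctan.differentiableOn) hN
  have i2 : volume ((fun x => Real.pi + Real.arctan x) '' N) = 0 :=
    null_image_diff (((differentiable_const Real.pi).add Real.differentiable_arctan).differentiableOn) hN
  have i3 : volume ((fun x => 2*Real.pi + Real.arctan x) '' N) = 0 :=
    null_image_diff (((differentiable_const (2*Real.pi)).add Real.differentiable_arctan).differentiableOn) hN
  refine measure_union_null (measure_union_null (measure_union_null (measure_union_null ?_ ?_) i1) i2) i3
  · exact Real.volume_singleton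
  · exact Real.volume_singleton

/-- Sublinear tracking along horocycles: if for an i.i.d. μ-random walk
(g_n) on SL(2,ℝ) (μ compactly supported) there is, for a.e. sample path, an angle θ̄ with
(1/n) log ‖g_{λn} r_{θ̄} (g_n⋯g_1)^{-1}‖ → 0 and θ̄ uniformly distributed, then there is
s̄ with (1/n) log ‖g_{λn} h_{s̄} (g_n⋯g_1)^{-1}‖ → 0 for a.e. path, and the distribution of
s̄ is in the measure class of Lebesgue measure on ℝ. -/
theorem sublinear_tracking_horocycle {Ω : Type*} [MeasurableSpace Ω]
    (P : Measure Ω) [IsProbabilityMeasure P]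
    (μ : Measure (Matrix (Fin 2) (Fin 2) ℝ)) [IsProbabilityMeasure μ]
    (hcompact : ∃ K : Set (Matrix (Fin 2) (Fin 2) ℝ), IsCompact K ∧ μ Kᶜ = 0)
    (hdet : μ {A : Matrix (Fin 2) (Fin 2) ℝ | A.det = 1}ᶜ = 0)
    (G : ℕ → Ω → Matrix (Fin 2) (Fin 2) ℝ)
    (hGmeas : ∀ n, Measurable (G n))
    (hGdet : ∀ n ω, (G n ω).det = 1)
    (hGiid : iIndepFun G P)
    (hGlaw : ∀ n, Measure.map (G n) P = μ)
    (lam : ℝ) (hlam : 0 < lam)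
    (θbar : Ω → ℝ) (hθmeas : Measurable θbar)
    (htrack : ∀ᵐ ω ∂P, Filter.Tendsto (fun n : ℕ =>
        (n : ℝ)⁻¹ * Real.log (mnorm (gmat (lam * n) * rotmat (θbar ω) * (revProd G n ω)⁻¹)))
        Filter.atTop (nhds 0))
    (huniform : Measure.map θbar P
        = (ENNReal.ofReal (2 * Real.pi))⁻¹ • volume.restrict (Set.Ico 0 (2 * Real.pi))) :
    ∃ sbar : Ω → ℝ, Measurable sbar ∧
      (∀ᵐ ω ∂P, Filter.Tendsto (fun n : ℕ =>
          (n : ℝ)⁻¹ * Real.log (mnorm (gmat (lam * n) * hmat (sbar ω) * (revProd G n ω)⁻¹)))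
          Filter.atTop (nhds 0))
      ∧ Measure.map sbar P ≪ volume ∧ (volume : Measure ℝ) ≪ Measure.map sbar P := by
  classical
  have hπ : 0 < Real.pi := Real.pi_pos
  have htanmeas : Measurable Real.tan := by
    have h : Measurable fun x : ℝ => Real.sin x / Real.cos x :=
      Real.measurable_sin.div Real.measurable_cos
    have e : Real.tan = fun x : ℝ => Real.sin x / Real.cos x := funext Real.tan_eq_sin_div_cos
    rw [e]; exact h
  set f : ℝ → ℝ := fun x => -Real.tan x with hfdef
  have hfmeas : Measurable f := htanmeas.neg
  have hsmeas : Measurable (fun ω => f (θbar ω)) := hfmeas.comp hθmeas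
  -- key computation of measures of θbar-preimages
  have hcomp : ∀ S : Set ℝ, MeasurableSet S →
      P (θbar ⁻¹' S) = (ENNReal.ofReal (2 * Real.pi))⁻¹ * volume (S ∩ Set.Ico 0 (2*Real.pi)) := by
    intro S hS
    calc P (θbar ⁻¹' S) = Measure.map θbar P S := (Measure.map_apply hθmeas hS).symm
      _ = (ENNReal.ofReal (2 * Real.pi))⁻¹ * volume (S ∩ Set.Ico 0 (2*Real.pi)) := by
          rw [huniform, Measure.smul_apply, Measure.restrict_apply hS, smul_eq_mul]
  have hMapEq : ∀ E : Set ℝ, MeasurableSet E →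
      Measure.map (fun ω => f (θbar ω)) P E
        = (ENNReal.ofReal (2 * Real.pi))⁻¹ * volume (f ⁻¹' E ∩ Set.Ico 0 (2*Real.pi)) := by
    intro E hE
    rw [Measure.map_apply hsmeas hE]
    have : (fun ω => f (θbar ω)) ⁻¹' E = θbar ⁻¹' (f ⁻¹' E) := rfl
    rw [this, hcomp _ (hfmeas hE)]
  refine ⟨fun ω => f (θbar ω), hsmeas, ?_, ?_, ?_⟩
  · -- tracking
    have hZmeas : MeasurableSet {x : ℝ | Real.cos x = 0} :=
      Real.measurable_cos (measurableSet_singleton (0:ℝ))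
    have hZ : ∀ᵐ ω ∂P, Real.cos (θbar ω) ≠ 0 := by
      rw [ae_iff]
      have e : {ω | ¬ Real.cos (θbar ω) ≠ 0} = θbar ⁻¹' {x : ℝ | Real.cos x = 0} := by
        ext ω; simp
      rw [e, hcomp _ hZmeas,
        measure_mono_null (Set.inter_subset_left) volume_cos_zero, mul_zero]
    filter_upwards [htrack, hZ] with ω hω hcω
    exact tracking_pointwise hlam (θbar ω) hcω (fun n => (revProd G n ω)⁻¹)
      (fun n => by rw [Matrix.det_nonsing_inv, det_revProd G hGdet, Ring.inverse_one]) hω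
  · -- absolute continuity, forward
    refine Measure.AbsolutelyContinuous.mk (fun E hE hE0 => ?_)
    rw [hMapEq E hE, preimage_neg_tan_null hE0, mul_zero]
  · -- absolute continuity, reverse
    refine Measure.AbsolutelyContinuous.mk (fun E hE hE0 => ?_)
    rw [hMapEq E hE] at hE0
    have hc0 : (ENNReal.ofReal (2 * Real.pi))⁻¹ ≠ 0 :=
      ENNReal.inv_ne_zero.mpr ENNReal.ofReal_ne_top
    have hv0 : volume (f ⁻¹' E ∩ Set.Ico 0 (2*Real.pi)) = 0 := by
      rcases mul_eq_zero.mp hE0 with h | h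
      · exact absurd h hc0
      · exact h
    set A : Set ℝ := f ⁻¹' E ∩ Set.Ioo (Real.pi/2) (3*Real.pi/2) with hAdef
    have hA0 : volume A = 0 := by
      refine measure_mono_null ?_ hv0
      rintro θ ⟨hθ1, hθ2⟩
      exact ⟨hθ1, by constructor <;> [linarith [hθ2.1]; linarith [hθ2.2]]⟩
    have hEA : E = f '' A := by
      ext x
      constructor
      · intro hx
        refine ⟨Real.pi + Real.arctan (-x), ⟨?_, ?_, ?_⟩, ?_⟩
        · show f _ ∈ E
          have : f (Real.pi + Real.arctan (-x)) = x := by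
            show -Real.tan (Real.pi + Real.arctan (-x)) = x
            rw [add_comm, Real.tan_add_pi, Real.tan_arctan]; ring
          rw [this]; exact hx
        · linarith [Real.neg_pi_div_two_lt_arctan (-x)]
        · linarith [Real.arctan_lt_pi_div_two (-x)]
        · show -Real.tan (Real.pi + Real.arctan (-x)) = x
          rw [add_comm, Real.tan_add_pi, Real.tan_arctan]; ring
      · rintro ⟨θ, ⟨hθE, _⟩, rfl⟩
        exact hθE
    have hdiff : DifferentiableOn ℝ f A := by
      intro θ hθ
      have hcθ : Real.cos θ ≠ 0 := cos_ne_zero_Ioo hθ.2.1 hθ.2.2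
      exact ((Real.differentiableAt_tan.mpr hcθ).neg).differentiableWithinAt
    rw [hEA]
    exact null_image_diff hdiff hA0
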